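/- Let G be a group generated by s elements (i.e., admitting a generating tuple Fin s → G), and suppose there exists a surjective group homomorphism from G onto the free group F_m with m ≥ 2. Then G preforms the free group F_{m+s} on m + s generators. -/

import Mathlib

/-- `G` preforms `H` (written `G ⊑ H` in the paper). -/
def Preforms (G : Type*) (H : Type*) [Group G] [Group H] : Prop :=
  ∃ (k : ℕ) (t : Fin k → H), Subgroup.closure (Set.range t) = ⊤ ∧
    ∀ R : ℕ, ∃ s : Fin k → G, Subgroup.closure (Set.range s) = ⊤ ∧
      ∀ w : FreeGroup (Fin k), (FreeGroup.toWord w).length ≤ R →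
        (FreeGroup.lift s w = 1 ↔ FreeGroup.lift t w = 1)

namespace PreformsAux

open FreeGroup List

/-- Letter cancellation relation matching `FreeGroup.reduce`. -/
def Rd {β : Type*} (L : List (β × Bool)) : Prop :=
  List.Chain' (fun p q => ¬(p.1 = q.1 ∧ p.2 = !q.2)) L

variable {β : Type*} [DecidableEq β]

theorem rd_reduce (L : List (β × Bool)) : Rd (FreeGroup.reduce L) := by
  induction L with
  | nil => exact List.isChain_nil
  | cons p L ih =>
    rw [FreeGroup.reduce.cons]
    rcases h : FreeGroup.reduce L with _ | ⟨q, t⟩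
    · exact List.isChain_singleton _
    · rw [h] at ih
      show Rd (if p.1 = q.1 ∧ p.2 = !q.2 then t else p :: q :: t)
      by_cases hc : p.1 = q.1 ∧ p.2 = !q.2
      · rw [if_pos hc]; exact ih.tail
      · rw [if_neg hc]; exact List.isChain_cons_cons.mpr ⟨hc, ih⟩

theorem reduce_eq_self_of_rd {L : List (β × Bool)} (h : Rd L) : FreeGroup.reduce L = L := by
  induction L with
  | nil => rfl
  | cons p L ih =>
    have hL : FreeGroup.reduce L = L := ih h.tail
    rw [FreeGroup.reduce.cons, hL]
    cases L with
    | nil => rfl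
    | cons q t =>
      have hc : ¬(p.1 = q.1 ∧ p.2 = !q.2) := (List.isChain_cons_cons.mp h).1
      show (if p.1 = q.1 ∧ p.2 = !q.2 then t else p :: q :: t) = p :: q :: t
      rw [if_neg hc]

theorem rd_toWord (w : FreeGroup β) : Rd (FreeGroup.toWord w) := by
  have := FreeGroup.reduce_toWord w
  rw [← this]; exact rd_reduce _

theorem mk_ne_one_of_rd {L : List (β × Bool)} (h : Rd L) (hne : L ≠ []) :
    FreeGroup.mk L ≠ 1 := by
  intro h1
  have := congrArg FreeGroup.toWord h1
  rw [FreeGroup.toWord_mk, FreeGroup.toWord_one, reduce_eq_self_of_rd h] at this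
  exact hne this


/-! ### The alphabet and the substituted tuple -/

def xI (μ : ℕ) : Fin (μ+2) := ⟨0, by omega⟩
def yI (μ : ℕ) : Fin (μ+2) := ⟨1, by omega⟩

def xx (μ : ℕ) : FreeGroup (Fin (μ+2)) := .of (xI μ)
def yy (μ : ℕ) : FreeGroup (Fin (μ+2)) := .of (yI μ)

def Mj (R j : ℕ) : ℕ := (R+1) * (j+1)

lemma Mj_ge (R j : ℕ) : R + 1 ≤ Mj R j := by
  have : (R+1) * 1 ≤ (R+1) * (j+1) := Nat.mul_le_mul_left _ (by omega)
  simpa [Mj] using this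

lemma Mj_lt_of_lt (R j j' : ℕ) (h : j < j') : Mj R j + (R+1) ≤ Mj R j' := by
  have : (R+1) * (j+2) ≤ (R+1) * (j'+1) := Nat.mul_le_mul_left _ (by omega)
  simp only [Mj]; nlinarith

lemma Mj_inj (R j j' : ℕ) (h : Mj R j = Mj R j') : j = j' := by
  have := Nat.eq_of_mul_eq_mul_left (show 0 < R+1 by omega) h
  omega

def cc (μ R j : ℕ) : FreeGroup (Fin (μ+2)) := yy μ ^ Mj R j * xx μ * yy μ ^ Mj R j

def Tt (μ s R : ℕ) : Fin (μ+2+s) → FreeGroup (Fin (μ+2)) :=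
  fun i => if h : (i : ℕ) < μ+2 then .of ⟨i, h⟩ else cc μ R ((i : ℕ) - (μ+2))

def sg (b : Bool) : ℤ := cond b 1 (-1)

lemma sg_abs (b : Bool) : (sg b).natAbs = 1 := by cases b <;> rfl

/-- evaluation of a word in the letters of the tuple `Tt`. -/
def ev (μ s R : ℕ) (L : List (Fin (μ+2+s) × Bool)) : FreeGroup (Fin (μ+2)) :=
  (L.map fun p => cond p.2 (Tt μ s R p.1) (Tt μ s R p.1)⁻¹).prod

lemma ev_nil (μ s R : ℕ) : ev μ s R [] = 1 := rfl

lemma ev_cons (μ s R : ℕ) (p) (L) :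
    ev μ s R (p :: L) = (cond p.2 (Tt μ s R p.1) (Tt μ s R p.1)⁻¹) * ev μ s R L := by
  simp [ev]

/-! ### runs of `y`'s -/

def yRun (μ : ℕ) (t : ℤ) : List (Fin (μ+2) × Bool) :=
  List.replicate t.natAbs (yI μ, decide (0 ≤ t))

lemma yRun_zero (μ : ℕ) : yRun μ 0 = [] := rfl

lemma mk_replicate_true (a : Fin (μ+2)) (n : ℕ) :
    FreeGroup.mk (List.replicate n (a, true)) = FreeGroup.of a ^ n := by
  rw [← FreeGroup.toWord_of_pow, FreeGroup.mk_toWord]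

lemma mk_replicate_false (a : Fin (μ+2)) (n : ℕ) :
    FreeGroup.mk (List.replicate n (a, false)) = (FreeGroup.of a ^ n)⁻¹ := by
  have : List.replicate n (a, false) = FreeGroup.invRev (List.replicate n (a, true)) := by
    simp [FreeGroup.invRev, List.map_replicate]
  rw [this, ← FreeGroup.inv_mk, mk_replicate_true]

lemma mk_yRun (μ : ℕ) (t : ℤ) : FreeGroup.mk (yRun μ t) = yy μ ^ t := by
  rcases t with n | n
  · have h : (0:ℤ) ≤ Int.ofNat n := Int.ofNat_nonneg n
    simp only [yRun, Int.natAbs.eq_1, decide_eq_true h]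
    rw [mk_replicate_true]
    simp [yy, Int.ofNat_eq_coe, zpow_natCast]
  · have h : ¬ ((0:ℤ) ≤ Int.negSucc n) := Int.negSucc_not_nonneg n |>.mp
    simp only [yRun, Int.natAbs_negSucc, decide_eq_false h]
    rw [mk_replicate_false, zpow_negSucc]
    rfl

lemma rd_replicate {β : Type*} (n : ℕ) (a : β × Bool) : Rd (List.replicate n a) := by
  induction n with
  | zero => exact List.isChain_nil
  | succ n ih =>
    rw [List.replicate_succ]
    refine List.isChain_cons.mpr ⟨?_, ih⟩
    intro q hq
    have hqa : q = a := List.eq_of_mem_replicate (List.mem_of_mem_head? hq)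
    subst hqa
    simp

lemma rd_yRun (μ : ℕ) (t : ℤ) : Rd (yRun μ t) := rd_replicate _ _


/-! ### the normal form: a `y`-run followed by blocker/run pairs -/

def rest (μ : ℕ) : List ((Fin (μ+2) × Bool) × ℤ) → List (Fin (μ+2) × Bool)
  | [] => []
  | q :: bs => q.1 :: (yRun μ q.2 ++ rest μ bs)

def flat (μ : ℕ) (t : ℤ) (bs : List ((Fin (μ+2) × Bool) × ℤ)) : List (Fin (μ+2) × Bool) :=
  yRun μ t ++ rest μ bs

lemma head?_rest (μ : ℕ) (bs : List ((Fin (μ+2) × Bool) × ℤ)) :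
    (rest μ bs).head? = bs.head?.map Prod.fst := by
  cases bs <;> rfl

lemma mk_append_yRun (μ : ℕ) (t : ℤ) (l : List (Fin (μ+2) × Bool)) :
    FreeGroup.mk (yRun μ t ++ l) = yy μ ^ t * FreeGroup.mk l := by
  rw [← FreeGroup.mul_mk, mk_yRun]

lemma mk_cons (μ : ℕ) (q : Fin (μ+2) × Bool) (l : List (Fin (μ+2) × Bool)) :
    FreeGroup.mk (q :: l) = FreeGroup.mk [q] * FreeGroup.mk l := by
  rw [FreeGroup.mul_mk]; rfl

/-- prepending a `y`-run to a reduced word whose head is not a `y`. -/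
lemma rd_yRun_append (μ : ℕ) (t : ℤ) (l : List (Fin (μ+2) × Bool)) (h : Rd l)
    (hh : ∀ q ∈ l.head?, q.1 ≠ yI μ) : Rd (yRun μ t ++ l) := by
  refine List.isChain_append.mpr ⟨rd_yRun μ t, h, ?_⟩
  intro p hp q hq
  have hpa : p = (yI μ, decide (0 ≤ t)) :=
    List.eq_of_mem_replicate (List.mem_of_mem_getLast? hp)
  subst hpa
  exact fun hc => hh q hq hc.1.symm

lemma rd_cons {β : Type*} (p : β × Bool) (l : List (β × Bool)) (h : Rd l)
    (hh : ∀ q ∈ l.head?, ¬(p.1 = q.1 ∧ p.2 = !q.2)) : Rd (p :: l) :=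
  List.isChain_cons.mpr ⟨hh, h⟩

/-! ### analysis of words in the big alphabet -/

section Words

abbrev Λ (μ s : ℕ) := Fin (μ+2+s) × Bool

variable {μ s : ℕ}

def yΛ (b : Bool) : Λ μ s := (⟨1, by omega⟩, b)

def bval (R : ℕ) (p : Λ μ s) : ℤ :=
  if (p.1 : ℕ) < μ+2 then 0 else sg p.2 * Mj R ((p.1 : ℕ) - (μ+2))

def lead (R : ℕ) : List (Λ μ s) → ℤ
  | [] => 0
  | p :: L => if (p.1 : ℕ) = 1 then sg p.2 + lead R L else bval R p

def firstNB : List (Λ μ s) → Option (Λ μ s)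
  | [] => none
  | p :: L => if (p.1 : ℕ) = 1 then firstNB L else some p

def img (p : Λ μ s) : Fin (μ+2) × Bool :=
  if h : (p.1 : ℕ) < μ+2 then (⟨p.1, h⟩, p.2) else (xI μ, p.2)

variable {R : ℕ}

lemma bool_eq_of_ne_not {a b : Bool} (h : ¬ a = !b) : a = b := by
  cases a <;> cases b <;> simp_all

lemma decomp (L : List (Λ μ s)) (h : Rd L) :
    (∃ n b, L = List.replicate n (yΛ b)) ∨
    (∃ n b q tail, ((q : Λ μ s).1 : ℕ) ≠ 1 ∧
      L = List.replicate n (yΛ b) ++ q :: tail) := by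
  induction L with
  | nil => exact Or.inl ⟨0, true, rfl⟩
  | cons p L ih =>
    by_cases hp : (p.1 : ℕ) = 1
    case neg => exact Or.inr ⟨0, true, p, L, hp, rfl⟩
    have hpy : p = yΛ p.2 := Prod.ext (Fin.ext hp) rfl
    rcases ih h.tail with ⟨n, b, rfl⟩ | ⟨n, b, q, tail, hq, rfl⟩
    · rcases n with _ | n
      · exact Or.inl ⟨1, p.2, by rw [hpy]; rfl⟩
      · have h' : Rd (p :: (yΛ b :: List.replicate n (yΛ b))) := by
          rwa [List.replicate_succ] at h
        have hch := (List.isChain_cons_cons.mp h').1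
        have hb : p.2 = b := bool_eq_of_ne_not fun hbb => hch ⟨Fin.ext hp, hbb⟩
        have hpb : p = yΛ b := by rw [hpy, hb]
        exact Or.inl ⟨n+2, b, by rw [hpb]; rfl⟩
    · rcases n with _ | n
      · exact Or.inr ⟨1, p.2, q, tail, hq, by rw [hpy]; rfl⟩
      · have h' : Rd (p :: (yΛ b :: (List.replicate n (yΛ b) ++ q :: tail))) := by
          rwa [List.replicate_succ, List.cons_append] at h
        have hch := (List.isChain_cons_cons.mp h').1
        have hb : p.2 = b := bool_eq_of_ne_not fun hbb => hch ⟨Fin.ext hp, hbb⟩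
        have hpb : p = yΛ b := by rw [hpy, hb]
        exact Or.inr ⟨n+2, b, q, tail, hq, by rw [hpb]; rfl⟩


lemma lead_cons (p : Λ μ s) (L) :
    lead R (p :: L) = if (p.1 : ℕ) = 1 then sg p.2 + lead R L else bval R p := rfl

lemma firstNB_cons (p : Λ μ s) (L) :
    firstNB (p :: L) = if (p.1 : ℕ) = 1 then firstNB L else some p := rfl

lemma yΛ_fst_val (b : Bool) : (((yΛ b).1 : Fin (μ+2+s)) : ℕ) = 1 := rfl

lemma lead_replicate (n : ℕ) (b : Bool) :
    lead R (List.replicate n (yΛ b : Λ μ s)) = sg b * n := by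
  induction n with
  | zero => simp [lead]
  | succ n ih =>
    rw [List.replicate_succ, lead_cons, if_pos (yΛ_fst_val b), ih]
    simp only [yΛ]
    push_cast
    ring

lemma lead_rep_cons (n : ℕ) (b : Bool) (q : Λ μ s) (tail : List (Λ μ s))
    (hq : ((q.1 : Fin (μ+2+s)) : ℕ) ≠ 1) :
    lead R (List.replicate n (yΛ b) ++ q :: tail) = sg b * n + bval R q := by
  induction n with
  | zero => simp [lead_cons, if_neg hq]
  | succ n ih =>
    rw [List.replicate_succ, List.cons_append, lead_cons, if_pos (yΛ_fst_val b), ih]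
    simp only [yΛ]
    push_cast
    ring

lemma firstNB_replicate (n : ℕ) (b : Bool) :
    firstNB (List.replicate n (yΛ b : Λ μ s)) = none := by
  induction n with
  | zero => rfl
  | succ n ih => rw [List.replicate_succ, firstNB_cons, if_pos (yΛ_fst_val b), ih]

lemma firstNB_rep_cons (n : ℕ) (b : Bool) (q : Λ μ s) (tail : List (Λ μ s))
    (hq : ((q.1 : Fin (μ+2+s)) : ℕ) ≠ 1) :
    firstNB (List.replicate n (yΛ b) ++ q :: tail) = some q := by
  induction n with
  | zero => simp [firstNB_cons, if_neg hq]
  | succ n ih => rw [List.replicate_succ, List.cons_append, firstNB_cons, if_pos (yΛ_fst_val b), ih]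

/-! ### sigma computations -/

variable (R)

lemma sigma_y (p : Λ μ s) (hp : (p.1 : ℕ) = 1) :
    (cond p.2 (Tt μ s R p.1) (Tt μ s R p.1)⁻¹) = yy μ ^ sg p.2 := by
  have hlt : (p.1 : ℕ) < μ+2 := by omega
  have hT : Tt μ s R p.1 = yy μ := by
    unfold Tt
    rw [dif_pos hlt]
    unfold yy
    congr 1
    exact Fin.ext hp
  rw [hT]
  cases hb : p.2
  · simp [sg, zpow_neg, zpow_one]
  · simp [sg, zpow_one]

lemma sigma_single (p : Λ μ s) (hlt : (p.1 : ℕ) < μ+2) :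
    (cond p.2 (Tt μ s R p.1) (Tt μ s R p.1)⁻¹) = FreeGroup.mk [img p] := by
  have hT : Tt μ s R p.1 = FreeGroup.of ⟨(p.1 : ℕ), hlt⟩ := by
    unfold Tt; rw [dif_pos hlt]
  have himg : img p = (⟨(p.1 : ℕ), hlt⟩, p.2) := by
    unfold img; rw [dif_pos hlt]
  rw [hT, himg]
  cases hb : p.2
  · show (FreeGroup.of _)⁻¹ = _
    rw [show (FreeGroup.of (⟨(p.1 : ℕ), hlt⟩ : Fin (μ+2))) = FreeGroup.mk [(⟨(p.1 : ℕ), hlt⟩, true)] from rfl,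
      FreeGroup.inv_mk]
    simp [FreeGroup.invRev]
  · rfl

lemma sigma_block (p : Λ μ s) (hge : ¬((p.1 : ℕ) < μ+2)) :
    (cond p.2 (Tt μ s R p.1) (Tt μ s R p.1)⁻¹) =
      yy μ ^ (sg p.2 * (Mj R ((p.1 : ℕ) - (μ+2)) : ℤ)) * FreeGroup.mk [(xI μ, p.2)] *
        yy μ ^ (sg p.2 * (Mj R ((p.1 : ℕ) - (μ+2)) : ℤ)) := by
  have hT : Tt μ s R p.1 = cc μ R ((p.1 : ℕ) - (μ+2)) := by
    unfold Tt; rw [dif_neg hge]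
  rw [hT]
  have hxx : FreeGroup.mk [(xI μ, true)] = xx μ := rfl
  have hxxi : FreeGroup.mk [(xI μ, false)] = (xx μ)⁻¹ := by
    rw [show xx μ = FreeGroup.mk [(xI μ, true)] from rfl, FreeGroup.inv_mk]
    simp [FreeGroup.invRev]
  cases hb : p.2
  · show (cc μ R _)⁻¹ = _
    rw [cc, hxxi]
    simp only [sg, cond_false, mul_inv_rev]
    rw [show ((-1 : ℤ) * (Mj R ((p.1 : ℕ) - (μ+2)) : ℤ)) = -(Mj R ((p.1 : ℕ) - (μ+2)) : ℤ) by ring]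
    rw [zpow_neg, zpow_natCast]
    group
  · show cc μ R _ = _
    rw [cc, hxx]
    simp only [sg, cond_true, one_mul]
    rw [zpow_natCast]

/-! ### arithmetic exclusions -/

lemma arith1 (n M : ℕ) (b z : Bool) (hn : n ≤ R) (hM : R + 1 ≤ M) :
    sg z * (M : ℤ) + (sg b * (n : ℤ) + 0) ≠ 0 := by
  cases z <;> cases b <;> simp [sg] <;> omega

lemma arith2 (n M M' : ℕ) (z z' b : Bool) (hn : n ≤ R) (hM : R + 1 ≤ M) (hM' : R + 1 ≤ M')
    (hMM : M = M' ∨ M + (R+1) ≤ M' ∨ M' + (R+1) ≤ M)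
    (h : sg z * (M : ℤ) + (sg b * (n : ℤ) + sg z' * (M' : ℤ)) = 0) :
    M = M' ∧ z' = !z ∧ n = 0 := by
  cases z <;> cases z' <;> cases b <;> simp [sg] at h ⊢ <;> omega


lemma flat_def (t : ℤ) (bs : List ((Fin (μ+2) × Bool) × ℤ)) :
    flat μ t bs = yRun μ t ++ rest μ bs := rfl

lemma rest_cons (r : (Fin (μ+2) × Bool) × ℤ) (bs) :
    rest μ (r :: bs) = r.1 :: (yRun μ r.2 ++ rest μ bs) := rfl

lemma head?_yRun_append (t : ℤ) (ht : t ≠ 0) (l : List (Fin (μ+2) × Bool)) :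
    (yRun μ t ++ l).head? = some (yI μ, decide (0 ≤ t)) := by
  have h0 : t.natAbs ≠ 0 := Int.natAbs_ne_zero.mpr ht
  rcases hk : t.natAbs with _ | k
  · exact absurd hk h0
  · rw [yRun, hk, List.replicate_succ, List.cons_append, List.head?_cons]

lemma xI_ne_yI : xI μ ≠ yI μ := by
  intro hc
  have := congrArg Fin.val hc
  simp [xI, yI] at this

/-- The main invariant: evaluating a reduced word of length at most `R` gives
an element in explicit reduced normal form. -/
lemma main (L : List (Λ μ s)) (h : Rd L) (hl : L.length ≤ R) :
    ∃ (t : ℤ) (bs : List ((Fin (μ+2) × Bool) × ℤ)),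
      ev μ s R L = FreeGroup.mk (flat μ t bs) ∧ Rd (flat μ t bs) ∧
      t = lead R L ∧
      bs.head?.map Prod.fst = (firstNB L).map img ∧
      (∀ q ∈ bs, q.1.1 ≠ yI μ) := by
  induction L with
  | nil =>
    exact ⟨0, [], FreeGroup.one_eq_mk, List.isChain_nil, rfl, rfl, by simp⟩
  | cons p L ih =>
    have hlL : L.length ≤ R := by rw [List.length_cons] at hl; omega
    obtain ⟨t, bs, he, hrd, hlead, hhead, hby⟩ := ih h.tail hlL
    have hrd' : Rd (yRun μ t ++ rest μ bs) := by rwa [flat_def] at hrd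
    have hsplit := List.isChain_append.mp hrd'
    have hrdrest : Rd (rest μ bs) := hsplit.2.1
    have hresthead : ∀ q ∈ (rest μ bs).head?, q.1 ≠ yI μ := by
      intro q hq
      rw [head?_rest] at hq
      cases bs with
      | nil => simp at hq
      | cons r bs' =>
        simp only [List.head?_cons, Option.map_some] at hq
        have hq' : q = r.1 := by exact_mod_cast Option.some_injective _ hq.symm
        rw [hq']
        exact hby r List.mem_cons_self
    by_cases hp1 : (p.1 : ℕ) = 1
    · -- CASE: single letter `y`
      refine ⟨sg p.2 + t, bs, ?_, ?_, ?_, ?_, hby⟩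
      · rw [ev_cons, sigma_y R p hp1, he, flat_def, flat_def, mk_append_yRun, mk_append_yRun,
          ← mul_assoc, ← zpow_add]
      · rw [flat_def]
        exact rd_yRun_append _ _ _ hrdrest hresthead
      · rw [lead_cons, if_pos hp1, hlead]
      · rw [firstNB_cons, if_pos hp1]
        exact hhead
    · by_cases hp2 : (p.1 : ℕ) < μ+2
      · -- CASE: single blocker letter
        have hβ1 : (img p).1 = ⟨(p.1 : ℕ), hp2⟩ := by unfold img; rw [dif_pos hp2]
        have hβ2 : (img p).2 = p.2 := by unfold img; rw [dif_pos hp2]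
        have hβy : (img p).1 ≠ yI μ := by
          rw [hβ1]
          intro hc
          exact hp1 (congrArg Fin.val hc)
        have hnc : ∀ q' ∈ (yRun μ t ++ rest μ bs).head?,
            ¬((img p).1 = q'.1 ∧ (img p).2 = !q'.2) := by
          intro q' hq'
          by_cases ht0 : t = 0
          · rw [ht0, yRun_zero, List.nil_append, head?_rest] at hq'
            cases bs with
            | nil => simp at hq'
            | cons r bs' =>
              simp only [List.head?_cons, Option.map_some] at hq'
              have hq'' : q' = r.1 := by exact_mod_cast Option.some_injective _ hq'.symm
              subst hq''
              rcases hfb : firstNB L with _ | q0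
              · rw [hfb] at hhead; simp at hhead
              · rw [hfb] at hhead
                simp only [List.head?_cons, Option.map_some] at hhead
                have hr1 : r.1 = img q0 := by exact_mod_cast Option.some_injective _ hhead
                rcases decomp L h.tail with ⟨n, b, rfl⟩ | ⟨n, b, q1, tail, hq1, rfl⟩
                · rw [firstNB_replicate] at hfb; exact absurd hfb (by simp)
                · rw [firstNB_rep_cons n b q1 tail hq1] at hfb
                  have hq01 : q0 = q1 := by exact_mod_cast Option.some_injective _ hfb.symm
                  subst hq01
                  have hn : n ≤ R := by
                    have := hlL
                    rw [List.length_append, List.length_replicate] at this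
                    omega
                  have ht' : t = sg b * n + bval R q0 := by
                    rw [hlead, lead_rep_cons n b q0 tail hq1]
                  by_cases hq0lt : (q0.1 : ℕ) < μ+2
                  · -- single blocker first in L: run must be empty, reducedness kicks in
                    have hbv : bval R q0 = 0 := by unfold bval; rw [if_pos hq0lt]
                    have hn0 : n = 0 := by
                      rw [ht0, hbv] at ht'
                      cases b <;> simp [sg] at ht' <;> omega
                    subst hn0
                    have hch := (List.isChain_cons_cons.mp h).1
                    intro hcan
                    have himgq : img q0 = (⟨(q0.1 : ℕ), hq0lt⟩, q0.2) := by
                      unfold img; rw [dif_pos hq0lt]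
                    rw [hβ1, hβ2, hr1, himgq] at hcan
                    have hv : ((⟨(p.1 : ℕ), hp2⟩ : Fin (μ+2))) = (⟨(q0.1 : ℕ), hq0lt⟩ : Fin (μ+2)) :=
                      hcan.1
                    have hval : (p.1 : ℕ) = (q0.1 : ℕ) := by simpa [Fin.mk.injEq] using hv
                    exact hch ⟨Fin.ext hval, hcan.2⟩
                  · -- block first in L: impossible since |t| too small
                    have hbv : bval R q0 = sg q0.2 * Mj R ((q0.1 : ℕ) - (μ+2)) := by
                      unfold bval; rw [if_neg hq0lt]
                    exfalso
                    rw [hbv] at ht'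
                    have hM : R + 1 ≤ Mj R ((q0.1 : ℕ) - (μ+2)) := Mj_ge _ _
                    rw [ht'] at ht0
                    cases b <;> cases hb0 : q0.2 <;> rw [hb0] at ht0 <;> simp [sg] at ht0 <;> omega
          · rw [head?_yRun_append t ht0] at hq'
            have hq'' : q' = (yI μ, decide (0 ≤ t)) := by
              exact_mod_cast Option.some_injective _ hq'.symm
            subst hq''
            intro hcan
            exact hβy hcan.1
        refine ⟨0, (img p, t) :: bs, ?_, ?_, ?_, ?_, ?_⟩
        · rw [ev_cons, sigma_single R p hp2, he, flat_def, flat_def, yRun_zero, List.nil_append,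
            rest_cons, FreeGroup.mul_mk]
          rfl
        · rw [flat_def, yRun_zero, List.nil_append, rest_cons]
          exact rd_cons _ _ hrd' hnc
        · rw [lead_cons, if_neg hp1]
          unfold bval
          rw [if_pos hp2]
        · rw [firstNB_cons, if_neg hp1]
          rfl
        · intro q hq
          rcases List.mem_cons.mp hq with hq | hq
          · rw [hq]; exact hβy
          · exact hby q hq
      · -- CASE: block letter
        have hM : R + 1 ≤ Mj R ((p.1 : ℕ) - (μ+2)) := Mj_ge _ _
        set M : ℤ := (Mj R ((p.1 : ℕ) - (μ+2)) : ℤ) with hMdef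
        have habs : sg p.2 * M + t ≠ 0 := by
          rcases decomp L h.tail with ⟨n, b, rfl⟩ | ⟨n, b, q1, tail, hq1, rfl⟩
          · have hn : n ≤ R := by
              have := hlL
              rw [List.length_replicate] at this
              omega
            rw [hlead, lead_replicate]
            cases p.2 <;> cases b <;> simp [sg, hMdef] <;> omega
          · have hn : n ≤ R := by
              have := hlL
              rw [List.length_append, List.length_replicate] at this
              omega
            rw [hlead, lead_rep_cons n b q1 tail hq1]
            by_cases hq0lt : (q1.1 : ℕ) < μ+2
            · have hbv : bval R q1 = 0 := by unfold bval; rw [if_pos hq0lt]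
              rw [hbv]
              exact arith1 R n _ b p.2 hn hM
            · have hbv : bval R q1 = sg q1.2 * Mj R ((q1.1 : ℕ) - (μ+2)) := by
                unfold bval; rw [if_neg hq0lt]
              rw [hbv]
              intro hzero
              set M' := Mj R ((q1.1 : ℕ) - (μ+2)) with hM'def
              have hM' : R + 1 ≤ M' := Mj_ge _ _
              have hMM : Mj R ((p.1 : ℕ) - (μ+2)) = M' ∨
                  Mj R ((p.1 : ℕ) - (μ+2)) + (R+1) ≤ M' ∨
                  M' + (R+1) ≤ Mj R ((p.1 : ℕ) - (μ+2)) := by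
                rcases Nat.lt_trichotomy ((p.1 : ℕ) - (μ+2)) ((q1.1 : ℕ) - (μ+2)) with hj | hj | hj
                · exact Or.inr (Or.inl (Mj_lt_of_lt R _ _ hj))
                · rw [hj]; exact Or.inl rfl
                · exact Or.inr (Or.inr (Mj_lt_of_lt R _ _ hj))
              obtain ⟨hMeq, hzb, hn0⟩ := arith2 R n _ _ p.2 q1.2 b hn hM hM' hMM hzero
              -- n = 0, so q1 is adjacent to p; and q1 = p⁻¹ contradicting reducedness
              subst hn0
              have hjj : ((p.1 : ℕ) - (μ+2)) = ((q1.1 : ℕ) - (μ+2)) := Mj_inj R _ _ hMeq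
              have hq1ge : ¬ ((q1.1 : ℕ) < μ+2) := hq0lt
              have hfin : p.1 = q1.1 := by
                apply Fin.ext
                omega
              have hch := (List.isChain_cons_cons.mp h).1
              exact hch ⟨hfin, by rw [hzb, Bool.not_not]⟩
        have hnc : ∀ q' ∈ (yRun μ (sg p.2 * M + t) ++ rest μ bs).head?,
            ¬((xI μ, p.2).1 = q'.1 ∧ (xI μ, p.2).2 = !q'.2) := by
          intro q' hq'
          rw [head?_yRun_append _ habs] at hq'
          have hq'' : q' = (yI μ, decide (0 ≤ sg p.2 * M + t)) := by
            exact_mod_cast Option.some_injective _ hq'.symm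
          subst hq''
          intro hcan
          exact xI_ne_yI hcan.1
        refine ⟨sg p.2 * M, ((xI μ, p.2), sg p.2 * M + t) :: bs, ?_, ?_, ?_, ?_, ?_⟩
        · rw [ev_cons, sigma_block R p hp2, ← hMdef, he, flat_def, flat_def]
          conv_rhs => rw [mk_append_yRun, rest_cons, mk_cons, mk_append_yRun]
          rw [mk_append_yRun, zpow_add]
          group
        · rw [flat_def, rest_cons]
          apply rd_yRun_append
          · exact rd_cons _ _ (rd_yRun_append _ _ _ hrdrest hresthead) hnc
          · intro q hq
            simp only [List.head?_cons] at hq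
            have hq'' : q = (xI μ, p.2) := by exact_mod_cast Option.some_injective _ hq.symm
            rw [hq'']
            exact xI_ne_yI
        · rw [lead_cons, if_neg hp1]
          unfold bval
          rw [if_neg hp2]
        · rw [firstNB_cons, if_neg hp1]
          have himgp : img p = (xI μ, p.2) := by unfold img; rw [dif_neg hp2]
          simp [himgp]
        · intro q hq
          rcases List.mem_cons.mp hq with hq | hq
          · rw [hq]; exact xI_ne_yI
          · exact hby q hq

end Words


lemma rest_nil : rest μ ([] : List ((Fin (μ+2) × Bool) × ℤ)) = [] := rfl

/-- The crucial lemma: a word of length at most `R` that dies under `Tt` is trivial. -/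
lemma crux (μ s R : ℕ) (w : FreeGroup (Fin (μ+2+s))) (hw : (FreeGroup.toWord w).length ≤ R)
    (h1 : FreeGroup.lift (Tt μ s R) w = 1) : w = 1 := by
  by_contra hne
  have hL : FreeGroup.toWord w ≠ [] := fun hc => hne (FreeGroup.toWord_eq_nil_iff.mp hc)
  have hr : Rd (FreeGroup.toWord w) := rd_toWord w
  obtain ⟨t, bs, he, hrd, hlead, hhead, hby⟩ := main R (FreeGroup.toWord w) hr hw
  have hev : FreeGroup.lift (Tt μ s R) w = ev μ s R (FreeGroup.toWord w) := by
    conv_lhs => rw [← FreeGroup.mk_toWord (x := w)]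
    rw [FreeGroup.lift_mk]
    rfl
  rw [hev, he] at h1
  have hne2 : flat μ t bs ≠ [] := by
    cases bs with
    | nil =>
      rcases decomp (FreeGroup.toWord w) hr with ⟨n, b, hrep⟩ | ⟨n, b, q, tail, hq, hrep⟩
      · have hn : n ≠ 0 := by
          intro h0
          rw [h0] at hrep
          exact hL (by simpa using hrep)
        have ht : t = sg b * n := by rw [hlead, hrep, lead_replicate]
        have htne : t ≠ 0 := by rw [ht]; cases b <;> simp [sg] <;> omega
        have hlen : (flat μ t []).length = t.natAbs := by
          rw [flat_def, rest_nil, List.append_nil, yRun, List.length_replicate]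
        intro hc
        rw [hc] at hlen
        simp only [List.length_nil] at hlen
        exact htne (Int.natAbs_eq_zero.mp hlen.symm)
      · exfalso
        rw [hrep, firstNB_rep_cons n b q tail hq] at hhead
        simp at hhead
    | cons r bs' =>
      rw [flat_def, rest_cons]
      simp
  exact mk_ne_one_of_rd hrd hne2 h1

end PreformsAux

open PreformsAux in
private theorem preforms_free_of_free_quotient_aux
    (G : Type*) [Group G] (s m : ℕ) (hm : 2 ≤ m)
    (hgen : ∃ g : Fin s → G, Subgroup.closure (Set.range g) = ⊤)
    (f : G →* FreeGroup (Fin m)) (hf : Function.Surjective f) :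
    ∃ (k : ℕ) (t : Fin k → FreeGroup (Fin (m+s))), Subgroup.closure (Set.range t) = ⊤ ∧
    ∀ R : ℕ, ∃ sf : Fin k → G, Subgroup.closure (Set.range sf) = ⊤ ∧
      ∀ w : FreeGroup (Fin k), (FreeGroup.toWord w).length ≤ R →
        (FreeGroup.lift sf w = 1 ↔ FreeGroup.lift t w = 1) := by
  classical
  obtain ⟨g, hg⟩ := hgen
  obtain ⟨μ, rfl⟩ : ∃ μ, m = μ + 2 := ⟨m - 2, by omega⟩
  choose xfun hxfun using fun i : Fin (μ+2) => hf (FreeGroup.of i)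
  set θ : FreeGroup (Fin (μ+2)) →* G := FreeGroup.lift xfun with hθ
  have hsec : ∀ v, f (θ v) = v := by
    intro v
    have hcomp : f.comp θ = MonoidHom.id (FreeGroup (Fin (μ+2))) :=
      FreeGroup.ext_hom _ _ (fun a => by simp [hθ, hxfun a])
    calc f (θ v) = (f.comp θ) v := rfl
    _ = v := by rw [hcomp]; rfl
  refine ⟨μ+2+s, FreeGroup.of, FreeGroup.closure_range_of _, ?_⟩
  intro R
  set γ : Fin (μ+2+s) → G := fun i => if h : (i : ℕ) < μ+2 then xfun ⟨i, h⟩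
      else g ⟨(i : ℕ) - (μ+2), by have := i.isLt; omega⟩ *
        θ ((f (g ⟨(i : ℕ) - (μ+2), by have := i.isLt; omega⟩))⁻¹ * cc μ R ((i : ℕ) - (μ+2)))
    with hγ
  have hγpos : ∀ (i : Fin (μ+2+s)) (h : (i : ℕ) < μ+2), γ i = xfun ⟨i, h⟩ := by
    intro i h
    simp only [hγ]
    rw [dif_pos h]
  have hγneg : ∀ (i : Fin (μ+2+s)) (h : ¬ (i : ℕ) < μ+2),
      γ i = g ⟨(i : ℕ) - (μ+2), by have := i.isLt; omega⟩ *
        θ ((f (g ⟨(i : ℕ) - (μ+2), by have := i.isLt; omega⟩))⁻¹ * cc μ R ((i : ℕ) - (μ+2))) := by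
    intro i h
    simp only [hγ]
    rw [dif_neg h]
  have hfγ : ∀ i, f (γ i) = Tt μ s R i := by
    intro i
    by_cases h : (i : ℕ) < μ+2
    · rw [hγpos i h]
      unfold Tt
      rw [dif_pos h]
      exact hxfun _
    · rw [hγneg i h]
      unfold Tt
      rw [dif_neg h, map_mul, hsec]
      group
  have hxmem : ∀ v : Fin (μ+2), xfun v ∈ Subgroup.closure (Set.range γ) := by
    intro v
    have hv : γ ⟨(v : ℕ), by omega⟩ = xfun v := by
      rw [hγpos ⟨(v : ℕ), by omega⟩ v.isLt]
    rw [← hv]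
    exact Subgroup.subset_closure ⟨_, rfl⟩
  have hθmem : ∀ v, θ v ∈ Subgroup.closure (Set.range γ) := by
    intro v
    have h1 : θ v ∈ (FreeGroup.lift xfun).range := ⟨v, rfl⟩
    rw [FreeGroup.range_lift_eq_closure] at h1
    have h2 : Subgroup.closure (Set.range xfun) ≤ Subgroup.closure (Set.range γ) := by
      apply (Subgroup.closure_le _).mpr
      rintro _ ⟨v', rfl⟩
      exact hxmem v'
    exact h2 h1
  have hgmem : ∀ j : Fin s, g j ∈ Subgroup.closure (Set.range γ) := by
    intro j
    have hjlt := j.isLt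
    set i : Fin (μ+2+s) := ⟨μ+2+(j : ℕ), by omega⟩ with hi
    have hnlt : ¬ ((i : ℕ) < μ+2) := by
      simp only [hi]
      omega
    have hji : (⟨(i : ℕ) - (μ+2), by have := i.isLt; omega⟩ : Fin s) = j := by
      apply Fin.ext
      simp only [hi]
      omega
    have hγi := hγneg i hnlt
    rw [hji] at hγi
    have hgj : g j = γ i * (θ ((f (g j))⁻¹ * cc μ R ((i : ℕ) - (μ+2))))⁻¹ := by
      rw [hγi]
      group
    rw [hgj]
    exact Subgroup.mul_mem _ (Subgroup.subset_closure ⟨i, rfl⟩)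
      (Subgroup.inv_mem _ (hθmem _))
  have hγgen : Subgroup.closure (Set.range γ) = ⊤ := by
    have h1 : Subgroup.closure (Set.range g) ≤ Subgroup.closure (Set.range γ) := by
      apply (Subgroup.closure_le _).mpr
      rintro _ ⟨j, rfl⟩
      exact SetLike.mem_coe.mpr (hgmem j)
    rw [hg] at h1
    exact top_unique h1
  refine ⟨γ, hγgen, ?_⟩
  intro w hw
  constructor
  · intro h1
    have hcomp : f.comp (FreeGroup.lift γ) = FreeGroup.lift (Tt μ s R) :=
      FreeGroup.ext_hom _ _ (fun a => by simp [hfγ a])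
    have h2 : FreeGroup.lift (Tt μ s R) w = 1 := by
      calc FreeGroup.lift (Tt μ s R) w = f (FreeGroup.lift γ w) := by rw [← hcomp]; rfl
      _ = 1 := by rw [h1, map_one]
    have h3 := crux μ s R w hw h2
    simp [h3]
  · intro h2
    have h3 : w = 1 := by
      have h4 := FreeGroup.lift_of_apply w
      rw [← h4]
      exact h2
    simp [h3]

/-- An `s`-generated group admitting the free group `F_m` (`m ≥ 2`) as a quotient
preforms the free group on `m + s` generators. -/
theorem preforms_free_of_free_quotient
    (G : Type*) [Group G] (s m : ℕ) (hm : 2 ≤ m)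
    (hgen : ∃ g : Fin s → G, Subgroup.closure (Set.range g) = ⊤)
    (f : G →* FreeGroup (Fin m)) (hf : Function.Surjective f) :
    Preforms G (FreeGroup (Fin (m + s))) :=
  preforms_free_of_free_quotient_aux G s m hm hgen f hf
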